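/- Let A be an n×n Hermitian matrix whose trace satisfies tr(A) ≥ 2πn. Then there exists a Hermitian matrix A' with e^{iA'} = e^{iA}, tr(A') = tr(A), A' positive semidefinite, and such that any two eigenvalues λᵢ, λⱼ of A' satisfy |λᵢ − λⱼ| ≤ 2πn. -/

import Mathlib

open scoped ComplexOrder

open Matrix in
lemma my_trace_unitary_conj {n : ℕ} (U : Matrix.unitaryGroup (Fin n) ℂ) (v : Fin n → ℂ) :
    ((U : Matrix (Fin n) (Fin n) ℂ) * Matrix.diagonal v
      * star (U : Matrix (Fin n) (Fin n) ℂ)).trace = ∑ i, v i := by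
  rw [Matrix.trace_mul_cycle, Matrix.UnitaryGroup.star_mul_self, one_mul, Matrix.trace_diagonal]

lemma my_sum_indicator (n k : ℕ) (hk : k ≤ n) :
    ∑ i ∈ Finset.range n, (if i < k then (1:ℤ) else 0) = k := by
  rw [Finset.range_eq_Ico, ← Finset.sum_Ico_consecutive _ (Nat.zero_le k) hk]
  have h1 : ∀ i ∈ Finset.Ico 0 k, (if i < k then (1:ℤ) else 0) = 1 := by
    intro i hi; simp [(Finset.mem_Ico.mp hi).2]
  have h2 : ∀ i ∈ Finset.Ico k n, (if i < k then (1:ℤ) else 0) = 0 := by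
    intro i hi; simp [Nat.not_lt.mpr (Finset.mem_Ico.mp hi).1]
  rw [Finset.sum_congr rfl h1, Finset.sum_congr rfl h2]
  simp

theorem hermitian_log_normalization {n : ℕ}
    (A : Matrix (Fin n) (Fin n) ℂ) (hA : A.IsHermitian)
    (htr : 2 * Real.pi * n ≤ (A.trace).re) :
    ∃ A' : Matrix (Fin n) (Fin n) ℂ, ∃ hA' : A'.IsHermitian,
      NormedSpace.exp (Complex.I • A') = NormedSpace.exp (Complex.I • A) ∧
      A'.trace = A.trace ∧
      A'.PosSemidef ∧
      ∀ i j, |hA'.eigenvalues i - hA'.eigenvalues j| ≤ 2 * Real.pi * n := by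
  rcases Nat.eq_zero_or_pos n with hn | hn
  · subst hn
    refine ⟨A, hA, rfl, rfl, ⟨hA, fun x => ?_⟩, fun i j => i.elim0⟩
    simp [Subsingleton.elim x 0]
  -- main case
  have hπ : (0:ℝ) < 2 * Real.pi := by positivity
  set lam : Fin n → ℝ := hA.eigenvalues with hlam
  set m : Fin n → ℤ := fun i => ⌊lam i / (2 * Real.pi)⌋ with hm
  set M : ℤ := ∑ i, m i with hM
  have hfr0 : ∀ i, 0 ≤ lam i - m i * (2*Real.pi) := fun i =>
    Int.sub_floor_div_mul_nonneg (lam i) hπ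
  have hfr1 : ∀ i, lam i - m i * (2*Real.pi) < 2*Real.pi := fun i =>
    Int.sub_floor_div_mul_lt (lam i) hπ
  set U := hA.eigenvectorUnitary with hU
  -- trace of A
  have htrA : A.trace = ((∑ i, lam i : ℝ) : ℂ) := by
    conv_lhs => rw [hA.spectral_theorem, Unitary.conjStarAlgAut_apply]
    rw [my_trace_unitary_conj]
    push_cast
    rfl
  have hsumlam : 2 * Real.pi * n ≤ ∑ i, lam i := by
    rwa [htrA, Complex.ofReal_re] at htr
  -- M is nonneg
  have hfrsum : ∑ i, (lam i - m i * (2*Real.pi)) < n * (2*Real.pi) := by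
    calc ∑ i, (lam i - m i * (2*Real.pi)) < ∑ _i : Fin n, (2*Real.pi) :=
          Finset.sum_lt_sum_of_nonempty (Finset.univ_nonempty_iff.mpr
            ⟨⟨0, hn⟩⟩) (fun i _ => hfr1 i)
      _ = n * (2*Real.pi) := by simp [mul_comm]
  have hMeq : (M:ℝ) * (2*Real.pi) = ∑ i, lam i - ∑ i, (lam i - m i * (2*Real.pi)) := by
    rw [Finset.sum_sub_distrib, ← Finset.sum_mul]
    push_cast [hM]
    ring
  have hMpos : 0 ≤ M := by
    have h2 : 0 < (M:ℝ) * (2*Real.pi) := by rw [hMeq]; nlinarith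
    have h3 : 0 < (M:ℝ) := by nlinarith
    exact_mod_cast h3.le
  -- the shift integers
  set q : ℤ := M / n with hq
  set r : ℤ := M % n with hr
  have hq0 : 0 ≤ q := Int.ediv_nonneg hMpos (by positivity)
  have hr0 : 0 ≤ r := Int.emod_nonneg M (by positivity : (0:ℤ) < (n:ℤ)).ne'
  have hrn : r < n := Int.emod_lt_of_pos M (by exact_mod_cast hn)
  set c : Fin n → ℤ := fun i => q + if (i:ℤ) < r then 1 else 0 with hc
  have hcsum : ∑ i, c i = M := by
    have h1 : ∑ i : Fin n, (if ((i:ℕ):ℤ) < r then (1:ℤ) else 0)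
        = ∑ i ∈ Finset.range n, (if (i:ℤ) < r then (1:ℤ) else 0) :=
      Fin.sum_univ_eq_sum_range (fun j => if (j:ℤ) < r then (1:ℤ) else 0) n
    have h2 : ∑ i ∈ Finset.range n, (if (i:ℤ) < r then (1:ℤ) else 0)
        = ∑ i ∈ Finset.range n, (if i < r.toNat then (1:ℤ) else 0) :=
      Finset.sum_congr rfl (fun i _ => by congr 1; simp only [eq_iff_iff]; omega)
    rw [hc, Finset.sum_add_distrib, Finset.sum_const, Finset.card_univ, Fintype.card_fin,
      h1, h2, my_sum_indicator n r.toNat (by omega), nsmul_eq_mul,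
      Int.toNat_of_nonneg hr0, hq, hr]
    exact Int.mul_ediv_add_emod M n
  have hcq : ∀ i, q ≤ c i ∧ c i ≤ q + 1 := by
    intro i
    refine ⟨?_, ?_⟩ <;> simp only [hc] <;> split <;> omega
  -- new eigenvalues
  set l' : Fin n → ℝ := fun i => lam i - m i * (2*Real.pi) + c i * (2*Real.pi) with hl'
  have hl'lo : ∀ i, (q:ℝ) * (2*Real.pi) ≤ l' i := by
    intro i
    have h1 : (q:ℝ) ≤ (c i : ℝ) := by exact_mod_cast (hcq i).1
    have h2 := hfr0 i
    simp only [hl']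
    nlinarith
  have hl'hi : ∀ i, l' i < (q:ℝ) * (2*Real.pi) + 2 * (2*Real.pi) := by
    intro i
    have h1 : (c i : ℝ) ≤ (q:ℝ) + 1 := by exact_mod_cast (hcq i).2
    have h2 := hfr1 i
    simp only [hl']
    nlinarith
  have hq0' : (0:ℝ) ≤ (q:ℝ) := by exact_mod_cast hq0
  have hl'0 : ∀ i, 0 ≤ l' i := fun i => le_trans (by positivity) (hl'lo i)
  have hsuml' : ∑ i, l' i = ∑ i, lam i := by
    simp only [hl']
    rw [Finset.sum_add_distrib, Finset.sum_sub_distrib, ← Finset.sum_mul, ← Finset.sum_mul]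
    have h1 : ((∑ i, c i : ℤ) : ℝ) = ((∑ i, m i : ℤ) : ℝ) := by rw [hcsum, hM]
    push_cast at h1
    rw [h1]; ring
  -- the matrix
  set D : Matrix (Fin n) (Fin n) ℂ := Matrix.diagonal (fun i => (l' i : ℂ)) with hD
  set A' : Matrix (Fin n) (Fin n) ℂ :=
    (U : Matrix (Fin n) (Fin n) ℂ) * D * star (U : Matrix (Fin n) (Fin n) ℂ) with hA'def
  have hDherm : D.IsHermitian := by
    rw [hD, Matrix.isHermitian_diagonal_iff]
    intro i
    exact Complex.conj_ofReal _
  have hA' : A'.IsHermitian := by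
    rw [hA'def, Matrix.star_eq_conjTranspose]
    exact Matrix.isHermitian_mul_mul_conjTranspose _ hDherm
  refine ⟨A', hA', ?_, ?_, ?_, ?_⟩
  · -- exponentials agree
    have hUunit : IsUnit (U : Matrix (Fin n) (Fin n) ℂ) := (Unitary.toUnits U).isUnit
    have hUinv : (U : Matrix (Fin n) (Fin n) ℂ)⁻¹ = star (U : Matrix (Fin n) (Fin n) ℂ) :=
      Matrix.inv_eq_right_inv U.2.2
    have key : ∀ v : Fin n → ℝ,
        NormedSpace.exp (Complex.I • ((U : Matrix (Fin n) (Fin n) ℂ)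
            * Matrix.diagonal (fun i => (v i : ℂ)) * star (U : Matrix (Fin n) (Fin n) ℂ)))
        = (U : Matrix (Fin n) (Fin n) ℂ)
            * Matrix.diagonal (fun i => Complex.exp (Complex.I * v i))
            * star (U : Matrix (Fin n) (Fin n) ℂ) := by
      intro v
      have h1 : Complex.I • ((U : Matrix (Fin n) (Fin n) ℂ)
            * Matrix.diagonal (fun i => (v i : ℂ)) * star (U : Matrix (Fin n) (Fin n) ℂ))
          = (U : Matrix (Fin n) (Fin n) ℂ)
            * Matrix.diagonal (Complex.I • fun i => (v i : ℂ))
            * (U : Matrix (Fin n) (Fin n) ℂ)⁻¹ := by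
        rw [hUinv, Matrix.diagonal_smul, mul_smul_comm, smul_mul_assoc]
      have h2 : NormedSpace.exp (Complex.I • fun i => ((v i : ℂ)))
          = fun i => Complex.exp (Complex.I * v i) := by
        funext i
        rw [Pi.exp_def]
        simp only [Pi.smul_apply, smul_eq_mul]
        rw [← Complex.exp_eq_exp_ℂ]
      rw [h1, Matrix.exp_conj _ _ hUunit, Matrix.exp_diagonal, h2, hUinv]
    have hco : (Matrix.diagonal (RCLike.ofReal ∘ hA.eigenvalues) : Matrix (Fin n) (Fin n) ℂ)
        = Matrix.diagonal (fun i => ((lam i : ℝ) : ℂ)) := rfl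
    have hdiag : (fun i => Complex.exp (Complex.I * (l' i : ℂ)))
        = (fun i => Complex.exp (Complex.I * (lam i : ℂ))) := by
      funext i
      have h3 : Complex.I * (l' i : ℂ)
          = Complex.I * (lam i : ℂ) + ((c i - m i : ℤ) : ℂ) * (2 * (Real.pi:ℂ) * Complex.I) := by
        simp only [hl']
        push_cast
        ring
      rw [h3, Complex.exp_add, Complex.exp_int_mul_two_pi_mul_I, mul_one]
    rw [hA'def, hD, key l', hdiag]
    conv_rhs => rw [hA.spectral_theorem, Unitary.conjStarAlgAut_apply]
    rw [hco, key lam]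
  · -- traces agree
    rw [hA'def, hD, my_trace_unitary_conj, htrA, ← Complex.ofReal_sum]
    exact congrArg _ hsuml'
  · -- PosSemidef
    rw [hA'def, Matrix.star_eq_conjTranspose]
    refine Matrix.PosSemidef.mul_mul_conjTranspose_same ?_ _
    rw [hD, Matrix.posSemidef_diagonal_iff]
    intro i
    exact Complex.zero_le_real.mpr (hl'0 i)
  · -- eigenvalue distances
    have hspec : spectrum ℝ A' = Set.range l' := by
      ext x
      conv_lhs => rw [hA'def, hD, Unitary.spectrum_star_right_conjugate,
        ← spectrum.algebraMap_mem_iff ℂ, _root_.spectrum_diagonal, RCLike.algebraMap_eq_ofReal]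
      simp
    have hmem : ∀ i, ∃ k, hA'.eigenvalues i = l' k := by
      intro i
      have h := hA'.eigenvalues_mem_spectrum_real i
      rw [hspec] at h
      obtain ⟨k, hk⟩ := h
      exact ⟨k, hk.symm⟩
    intro i j
    obtain ⟨k, hk⟩ := hmem i
    obtain ⟨k', hk'⟩ := hmem j
    rw [hk, hk']
    rcases Nat.lt_or_ge n 2 with h2 | h2
    · have hkk : k = k' := by
        have hk1 := k.isLt
        have hk2 := k'.isLt
        exact Fin.ext (by omega)
      rw [hkk, sub_self, abs_zero]
      positivity
    · have h2' : (2:ℝ) ≤ (n:ℝ) := by exact_mod_cast h2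
      rw [abs_sub_le_iff]
      constructor <;>
        nlinarith [hl'lo k, hl'hi k, hl'lo k', hl'hi k', Real.pi_pos]
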